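/- Let n ≥ 5. For any two disjoint connected dominating sets D_1 and D_2 of the graph P_n^*, one has ||D_1| − |D_2|| ≥ n − 5. -/
import Mathlib


open SimpleGraph

variable {V : Type*}

/-- `T` is a spanning tree of `G`: a subgraph on all of `V` that is connected and acyclic. -/
def IsSpanningTree (G T : SimpleGraph V) : Prop :=
  T ≤ G ∧ T.Connected ∧ T.IsAcyclic

/-- The set of inner vertices of `T` (degree at least 2). -/
def innerSet (T : SimpleGraph V) : Set V :=
  {v | 2 ≤ (T.neighborSet v).ncard}

/-- Vertices that are inner vertices of at least two trees of the family. -/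
def innerMulti {k : ℕ} (T : Fin k → SimpleGraph V) : Set V :=
  {v | ∃ i j : Fin k, i ≠ j ∧ v ∈ innerSet (T i) ∧ v ∈ innerSet (T j)}

/-- Edges that belong to at least two trees of the family. -/
def edgeMulti {k : ℕ} (T : Fin k → SimpleGraph V) : Set (Sym2 V) :=
  {e | ∃ i j : Fin k, i ≠ j ∧ e ∈ (T i).edgeSet ∧ e ∈ (T j).edgeSet}

/-- A connected dominating set. -/
def IsConnDomSet (G : SimpleGraph V) (D : Set V) : Prop :=
  (G.induce D).Connected ∧ ∀ v ∉ D, ∃ w ∈ D, G.Adj v w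

/-- The graph `Pₙ*`: a path on `n` vertices together with a universal extra
vertex `Sum.inr ()` adjacent to every path vertex. -/
def pathStar (n : ℕ) : SimpleGraph (Fin n ⊕ Unit) :=
  SimpleGraph.fromRel (fun x y =>
    match x, y with
    | Sum.inl a, Sum.inl b => a.1 + 1 = b.1
    | Sum.inl _, Sum.inr _ => True
    | _, _ => False)

lemma pathStar_adj_inl {n : ℕ} (a b : Fin n) :
    (pathStar n).Adj (Sum.inl a) (Sum.inl b) ↔ (a.1 + 1 = b.1 ∨ b.1 + 1 = a.1) := by
  simp [pathStar, SimpleGraph.fromRel_adj]; omega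

/-- index function -/
def pidx {n : ℕ} : (Fin n ⊕ Unit) → ℕ := Sum.elim Fin.val (fun _ => 0)

lemma walk_interval {n : ℕ} {D : Set (Fin n ⊕ Unit)} (hu : Sum.inr () ∉ D) :
    ∀ {x y : ↥D} (_ : ((pathStar n).induce D).Walk x y) (c : Fin n),
      pidx x.1 ≤ c.1 → c.1 ≤ pidx y.1 → Sum.inl c ∈ D := by
  intro x y w
  induction w with
  | nil =>
    intro c h1 h2
    rename_i z
    obtain ⟨v, hv⟩ := z
    match v, hv with
    | Sum.inl j, hv =>
      simp only [pidx, Sum.elim_inl] at h1 h2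
      have : j = c := Fin.ext (by omega)
      exact this ▸ hv
    | Sum.inr (), hv => exact absurd hv hu
  | cons hadj p ih =>
    intro c h1 h2
    rename_i x₀ x₁ y₀
    obtain ⟨v, hv⟩ := x₀
    match v, hv with
    | Sum.inr (), hv => exact absurd hv hu
    | Sum.inl a, hv =>
      obtain ⟨v', hv'⟩ := x₁
      match v', hv' with
      | Sum.inr (), hv' => exact absurd hv' hu
      | Sum.inl a', hv' =>
        simp only [pidx, Sum.elim_inl] at h1 ⊢
        by_cases hc : c.1 = a.1
        · have : a = c := Fin.ext (by omega)
          exact this ▸ hv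
        · have hadj' : (pathStar n).Adj (Sum.inl a) (Sum.inl a') := hadj
          rw [pathStar_adj_inl] at hadj'
          exact ih c (by simp only [pidx, Sum.elim_inl]; omega) h2

lemma interior_mem {n : ℕ} (hn : 5 ≤ n) {D : Set (Fin n ⊕ Unit)}
    (hD : IsConnDomSet (pathStar n) D) (hu : Sum.inr () ∉ D) :
    ∀ c : Fin n, 1 ≤ c.1 → c.1 ≤ n - 2 → Sum.inl c ∈ D := by
  intro c hc1 hc2
  -- find a low element
  have hlow : ∃ a : Fin n, Sum.inl a ∈ D ∧ a.1 ≤ 1 := by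
    by_cases h0 : Sum.inl (⟨0, by omega⟩ : Fin n) ∈ D
    · exact ⟨_, h0, by simp⟩
    · obtain ⟨w, hwD, hadj⟩ := hD.2 _ h0
      match w, hwD with
      | Sum.inr (), hwD => exact absurd hwD hu
      | Sum.inl b, hwD =>
        rw [pathStar_adj_inl] at hadj
        simp at hadj
        exact ⟨b, hwD, by omega⟩
  have hhigh : ∃ b : Fin n, Sum.inl b ∈ D ∧ n - 2 ≤ b.1 := by
    by_cases h0 : Sum.inl (⟨n - 1, by omega⟩ : Fin n) ∈ D
    · exact ⟨_, h0, by simp only [Fin.val_mk]; omega⟩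
    · obtain ⟨w, hwD, hadj⟩ := hD.2 _ h0
      match w, hwD with
      | Sum.inr (), hwD => exact absurd hwD hu
      | Sum.inl b, hwD =>
        rw [pathStar_adj_inl] at hadj
        have := b.2
        exact ⟨b, hwD, by simp at hadj; omega⟩
  obtain ⟨a, ha, ha1⟩ := hlow
  obtain ⟨b, hb, hb1⟩ := hhigh
  obtain ⟨w⟩ := hD.1.preconnected ⟨Sum.inl a, ha⟩ ⟨Sum.inl b, hb⟩
  exact walk_interval hu w c (by simp [pidx]; omega) (by simp [pidx]; omega)

lemma aux_bound {n : ℕ} (hn : 5 ≤ n) {D₁ D₂ : Set (Fin n ⊕ Unit)}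
    (h₁ : IsConnDomSet (pathStar n) D₁) (h₂ : IsConnDomSet (pathStar n) D₂)
    (hd : Disjoint D₁ D₂) (hu : Sum.inr () ∉ D₁) :
    (n : ℤ) - 5 ≤ (D₁.ncard : ℤ) - (D₂.ncard : ℤ) := by
  have hint := interior_mem hn h₁ hu
  -- lower bound on D₁
  have hf : Set.range (fun i : Fin (n - 2) => (Sum.inl ⟨i.1 + 1, by omega⟩ : Fin n ⊕ Unit)) ⊆ D₁ := by
    rintro _ ⟨i, rfl⟩
    refine hint _ ?_ ?_ <;> (have := i.2; simp only [Fin.val_mk]; omega)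
  have hinj : Function.Injective (fun i : Fin (n - 2) => (Sum.inl ⟨i.1 + 1, by omega⟩ : Fin n ⊕ Unit)) := by
    intro i j h
    simp only [Sum.inl.injEq, Fin.mk.injEq] at h
    exact Fin.ext (by omega)
  have h1card : n - 2 ≤ D₁.ncard := by
    have h := Set.ncard_le_ncard hf (Set.toFinite D₁)
    rwa [← Set.image_univ, Set.ncard_image_of_injective _ hinj, Set.ncard_univ,
      Nat.card_eq_fintype_card, Fintype.card_fin] at h
  -- upper bound on D₂
  have hsub : D₂ ⊆ {Sum.inl (⟨0, by omega⟩ : Fin n), Sum.inl (⟨n - 1, by omega⟩ : Fin n), Sum.inr ()} := by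
    intro z hz
    have hz1 : z ∉ D₁ := fun h => hd.ne_of_mem h hz rfl
    match z with
    | Sum.inr () => simp
    | Sum.inl j =>
      by_contra hj
      simp only [Set.mem_insert_iff, Set.mem_singleton_iff, Sum.inl.injEq, reduceCtorEq,
        or_false, not_or] at hj
      have h1 : 1 ≤ j.1 := by
        rcases Nat.eq_zero_or_pos j.1 with h | h
        · exact absurd (Fin.ext h) hj.1
        · exact h
      have h2 : j.1 ≤ n - 2 := by
        have := j.2
        rcases Nat.lt_or_ge j.1 (n - 1) with h | h
        · omega
        · exact absurd (Fin.ext (by simp only [Fin.val_mk]; omega)) hj.2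
      exact hz1 (hint j h1 h2)
  have h2card : D₂.ncard ≤ 3 := by
    have := Set.ncard_le_ncard hsub (Set.toFinite _)
    have h3 : ({Sum.inl (⟨0, by omega⟩ : Fin n), Sum.inl (⟨n - 1, by omega⟩ : Fin n), (Sum.inr () : Fin n ⊕ Unit)} : Set (Fin n ⊕ Unit)).ncard ≤ 3 := by
      have e1 := Set.ncard_insert_le (Sum.inl (⟨0, by omega⟩ : Fin n))
        ({Sum.inl (⟨n - 1, by omega⟩ : Fin n), (Sum.inr () : Fin n ⊕ Unit)} : Set (Fin n ⊕ Unit))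
      have e2 := Set.ncard_insert_le (Sum.inl (⟨n - 1, by omega⟩ : Fin n))
        ({(Sum.inr () : Fin n ⊕ Unit)} : Set (Fin n ⊕ Unit))
      have e3 : ({(Sum.inr () : Fin n ⊕ Unit)} : Set (Fin n ⊕ Unit)).ncard = 1 :=
        Set.ncard_singleton _
      omega
    omega
  have : (n : ℤ) - 2 ≤ (D₁.ncard : ℤ) := by
    have := h1card; omega
  have : (D₂.ncard : ℤ) ≤ 3 := by exact_mod_cast h2card
  omega

/-- Any two disjoint connected dominating sets of `Pₙ*` (n ≥ 5) have sizes differing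
by at least `n - 5`. -/
theorem pathStar_unbalanced_cds (n : ℕ) (hn : 5 ≤ n)
    (D₁ D₂ : Set (Fin n ⊕ Unit))
    (h₁ : IsConnDomSet (pathStar n) D₁) (h₂ : IsConnDomSet (pathStar n) D₂)
    (hd : Disjoint D₁ D₂) :
    (n : ℤ) - 5 ≤ |(D₁.ncard : ℤ) - (D₂.ncard : ℤ)| := by
  by_cases hu : Sum.inr () ∈ D₁
  · have hu2 : Sum.inr () ∉ D₂ := fun h => hd.ne_of_mem hu h rfl
    rw [abs_sub_comm]
    exact le_trans (aux_bound hn h₂ h₁ hd.symm hu2) (le_abs_self _)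
  · exact le_trans (aux_bound hn h₁ h₂ hd hu) (le_abs_self _)
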